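/- Let g be increasing with g(κt) ≤ κ^{q-1}g(t) for κ ≥ 1 (doubling of order q−1), G(t)=∫₀ᵗ g, satisfying p G(t) ≤ t g(t) ≤ q G(t), p > 2. Choose ε₂ ∈ (0, q) and t ∈ (1, q') with ε₂ ≤ q − (q−1)t. Then there exists C = C(q, t, G(1)) such that for all a ≥ 1: g(a)^t ≤ C · G(a)^{1 − ε₂/q}. -/

import Mathlib

/-- Estimate used in Lemma 3.9: for `a ≥ 1`, `g(a)^t ≤ C G(a)^{1-ε₂/q}` whenever
`t ∈ (1, q')` and `0 < ε₂ ≤ q - (q-1)t`. -/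
theorem stmt_11 (g G : ℝ → ℝ) (p q : ℝ) (hp : 2 < p) (hpq : p ≤ q)
    (hg_mono : MonotoneOn g (Set.Ici 0))
    (hg_nonneg : ∀ s ≥ (0:ℝ), 0 ≤ g s)
    (hdoubling : ∀ κ ≥ (1:ℝ), ∀ s ≥ (0:ℝ), g (κ * s) ≤ κ ^ (q - 1) * g s)
    (hGg : ∀ s > (0:ℝ), p * G s ≤ s * g s ∧ s * g s ≤ q * G s)
    (hG_nonneg : ∀ s ≥ (0:ℝ), 0 ≤ G s)
    (t ε₂ : ℝ) (ht : t ∈ Set.Ioo 1 (q / (q - 1)))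
    (hε₂ : 0 < ε₂) (hε₂' : ε₂ ≤ q - (q - 1) * t) :
    ∃ C > (0:ℝ), ∀ a ≥ (1:ℝ), (g a) ^ t ≤ C * (G a) ^ (1 - ε₂ / q) := by
  have hq2 : (2:ℝ) < q := lt_of_lt_of_le hp hpq
  have hq0 : (0:ℝ) < q := by linarith
  have hq1 : (0:ℝ) < q - 1 := by linarith
  have ht1 : (1:ℝ) < t := ht.1
  have ht0 : (0:ℝ) < t := by linarith
  -- case g 1 = 0
  rcases eq_or_lt_of_le (hg_nonneg 1 (by norm_num)) with h0 | hg1pos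
  · refine ⟨1, one_pos, fun a ha ↦ ?_⟩
    have ha0 : (0:ℝ) ≤ a := by linarith
    have h1 : g a ≤ 0 := by
      have := hdoubling a ha 1 (by norm_num)
      rw [mul_one, ← h0] at this
      simpa using this
    have h2 : g a = 0 := le_antisymm h1 (hg_nonneg a ha0)
    rw [h2, Real.zero_rpow (by positivity)]
    have := Real.rpow_nonneg (hG_nonneg a ha0) (1 - ε₂ / q)
    linarith
  -- main case : g 1 > 0
  set g1 := g 1 with hg1
  set s := (q - 1) * t / q with hs
  have hs0 : 0 < s := by positivity
  set K := q * g1 ^ (1 / (q - 1)) with hK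
  have hKpos : 0 < K := by positivity
  set m := g1 / q with hm
  have hmpos : 0 < m := by positivity
  set δ := s - (1 - ε₂ / q) with hδ
  have hδ0 : δ ≤ 0 := by
    rw [hδ, hs, sub_nonpos, div_le_iff₀ hq0]
    have h1 : (1 - ε₂ / q) * q = q - ε₂ := by field_simp
    rw [h1]; linarith
  refine ⟨K ^ s * m ^ δ, by positivity, fun a ha ↦ ?_⟩
  have ha0 : (0:ℝ) < a := by linarith
  have hga1 : g1 ≤ g a := hg_mono (by norm_num) (le_of_lt ha0) ha
  have hgapos : 0 < g a := lt_of_lt_of_le hg1pos hga1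
  have hGa : a * g a ≤ q * G a := (hGg a ha0).2
  have hGam : m ≤ G a := by
    rw [hm, div_le_iff₀ hq0]
    calc g1 ≤ g a := hga1
    _ ≤ a * g a := le_mul_of_one_le_left hgapos.le ha
    _ ≤ q * G a := hGa
    _ = G a * q := mul_comm _ _
  have hGapos : 0 < G a := lt_of_lt_of_le hmpos hGam
  -- step 1 : g a ^ (q/(q-1)) ≤ K * G a
  have hdba : g a ≤ a ^ (q - 1) * g1 := by
    have := hdoubling a ha 1 (by norm_num)
    simpa using this
  have ha_lb : (g a / g1) ^ (1 / (q - 1)) ≤ a := by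
    have h1 : g a / g1 ≤ a ^ (q - 1) := by
      rw [div_le_iff₀ hg1pos]; exact hdba
    calc (g a / g1) ^ (1 / (q - 1)) ≤ (a ^ (q - 1)) ^ (1 / (q - 1)) :=
          Real.rpow_le_rpow (by positivity) h1 (by positivity)
    _ = a := by
        rw [← Real.rpow_mul ha0.le, mul_one_div, div_self (ne_of_gt hq1), Real.rpow_one]
  have key1 : g a ^ (q / (q - 1)) ≤ K * G a := by
    have hsplit : g a ^ (q / (q - 1)) = (g a / g1) ^ (1 / (q - 1)) * g a * g1 ^ (1 / (q - 1)) := by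
      have e1 : q / (q - 1) = 1 / (q - 1) + 1 := by field_simp; ring
      rw [e1, Real.rpow_add hgapos, Real.rpow_one,
        Real.div_rpow hgapos.le hg1pos.le]
      field_simp
    rw [hsplit, hK]
    calc (g a / g1) ^ (1 / (q - 1)) * g a * g1 ^ (1 / (q - 1))
        ≤ a * g a * g1 ^ (1 / (q - 1)) := by
          apply mul_le_mul_of_nonneg_right ?_ (by positivity)
          exact mul_le_mul_of_nonneg_right ha_lb hgapos.le
      _ ≤ q * G a * g1 ^ (1 / (q - 1)) := by
          apply mul_le_mul_of_nonneg_right hGa (by positivity)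
      _ = q * g1 ^ (1 / (q - 1)) * G a := by ring
  -- step 2 : raise to power s
  have key2 : g a ^ t ≤ K ^ s * G a ^ s := by
    have h2 : (g a ^ (q / (q - 1))) ^ s ≤ (K * G a) ^ s :=
      Real.rpow_le_rpow (by positivity) key1 hs0.le
    rw [← Real.rpow_mul hgapos.le] at h2
    have hexp : q / (q - 1) * s = t := by
      rw [hs]; field_simp
    rw [hexp, Real.mul_rpow hKpos.le hGapos.le] at h2
    exact h2
  -- step 3 : G a ^ s ≤ m ^ δ * G a ^ (1 - ε₂ / q)
  have key3 : G a ^ s ≤ m ^ δ * G a ^ (1 - ε₂ / q) := by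
    have hsd : s = δ + (1 - ε₂ / q) := by rw [hδ]; ring
    rw [hsd, Real.rpow_add hGapos]
    apply mul_le_mul_of_nonneg_right ?_ (by positivity)
    exact Real.rpow_le_rpow_of_nonpos hmpos hGam hδ0
  calc g a ^ t ≤ K ^ s * G a ^ s := key2
    _ ≤ K ^ s * (m ^ δ * G a ^ (1 - ε₂ / q)) := by
        apply mul_le_mul_of_nonneg_left key3 (by positivity)
    _ = K ^ s * m ^ δ * G a ^ (1 - ε₂ / q) := by ring
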